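/- For every integer n ≥ 1, the sum over all integer partitions λ = (λ_1 ≥ ⋯ ≥ λ_d) of n of binom(n+1, d) · (d!/m_λ) · n!/(λ_1!⋯λ_d!) equals (n+1)^n. -/

import Mathlib

open Finset

/-- `m_λ = ∏ᵢ rᵢ!`, where `rᵢ` is the number of parts of size `i` in the multiset of
parts `s`. -/
def mLambda (s : Multiset ℕ) : ℕ :=
  ∏ i ∈ s.toFinset, Nat.factorial (s.count i)

variable {α : Type*} [Fintype α] [DecidableEq α]

/-- The multiset of nonzero values of `k`. -/
def prof (k : α → ℕ) : Multiset ℕ := (Multiset.map k Finset.univ.val).filter (· ≠ 0)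

lemma count_prof (k : α → ℕ) {b : ℕ} (hb : b ≠ 0) :
    (prof k).count b = (Finset.univ.filter (fun i => k i = b)).card := by
  rw [prof, Multiset.count_filter, if_pos hb, Multiset.count_map]
  rw [Finset.card, Finset.filter_val]
  congr 1
  apply Multiset.filter_congr
  intro x _
  exact eq_comm

lemma count_prof_zero (k : α → ℕ) : (prof k).count 0 = 0 := by
  rw [prof, Multiset.count_filter]
  simp

lemma card_prof (k : α → ℕ) :
    Multiset.card (prof k) = (Finset.univ.filter (fun i => k i ≠ 0)).card := by
  rw [prof, ← Multiset.countP_eq_card_filter, Multiset.countP_map]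
  rfl

lemma sum_prof (k : α → ℕ) : (prof k).sum = ∑ i, k i := by
  have h := Multiset.filter_add_not (fun x => x ≠ 0) (Multiset.map k Finset.univ.val)
  have h2 : ((Multiset.map k Finset.univ.val).filter (fun x => ¬ x ≠ 0)).sum = 0 := by
    apply Multiset.sum_eq_zero
    intro x hx
    have := Multiset.of_mem_filter hx
    simpa using this
  calc (prof k).sum = (prof k).sum + ((Multiset.map k Finset.univ.val).filter (fun x => ¬ x ≠ 0)).sum := by rw [h2, add_zero]
    _ = (Multiset.map k Finset.univ.val).sum := by rw [← Multiset.sum_add, prof, h]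
    _ = ∑ i, k i := by rw [Finset.sum]

/-- Ambient finite set of functions with nonzero-value profile `s`. -/
def Fset (α : Type*) [Fintype α] [DecidableEq α] (s : Multiset ℕ) : Finset (α → ℕ) :=
  (Finset.piAntidiag Finset.univ s.sum).filter (fun k => prof k = s)

lemma mem_Fset {s : Multiset ℕ} {k : α → ℕ} : k ∈ Fset α s ↔ prof k = s := by
  constructor
  · exact fun h => (Finset.mem_filter.1 h).2
  · intro h
    refine Finset.mem_filter.2 ⟨Finset.mem_piAntidiag.2 ⟨?_, fun i _ => Finset.mem_univ i⟩, h⟩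
    rw [← h, sum_prof]

lemma Fset_zero : Fset α 0 = {fun _ => 0} := by
  ext k
  rw [mem_Fset, Finset.mem_singleton]
  constructor
  · intro h
    funext i
    by_contra hi
    have : k i ∈ prof k := by
      rw [prof, Multiset.mem_filter]
      exact ⟨Multiset.mem_map_of_mem _ (Finset.mem_univ i), hi⟩
    rw [h] at this
    exact absurd this (Multiset.notMem_zero _)
  · intro h
    rw [h, prof]
    rw [Multiset.filter_eq_nil]
    intro a ha
    simp only [Multiset.mem_map] at ha
    obtain ⟨i, _, hi⟩ := ha
    simp [← hi]

lemma filter_ne_toFinset (s : Multiset ℕ) (a : ℕ) :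
    (s.filter (· ≠ a)).toFinset = s.toFinset.erase a := by
  ext i
  simp only [Multiset.mem_toFinset, Multiset.mem_filter, Finset.mem_erase]
  tauto

lemma count_filter_ne (s : Multiset ℕ) {a i : ℕ} (hi : i ≠ a) :
    (s.filter (· ≠ a)).count i = s.count i := by
  rw [Multiset.count_filter, if_pos hi]

lemma card_filter_ne (s : Multiset ℕ) (a : ℕ) :
    Multiset.card s = s.count a + Multiset.card (s.filter (· ≠ a)) := by
  conv_lhs => rw [← Multiset.filter_add_not (· = a) s]
  rw [Multiset.card_add, Multiset.filter_eq', Multiset.card_replicate]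

lemma mLambda_filter (s : Multiset ℕ) {a : ℕ} (ha : a ∈ s) :
    mLambda s = (s.count a).factorial * mLambda (s.filter (· ≠ a)) := by
  have haf : a ∈ s.toFinset := Multiset.mem_toFinset.2 ha
  rw [mLambda, ← Finset.mul_prod_erase _ _ haf]
  congr 1
  rw [mLambda, filter_ne_toFinset]
  apply Finset.prod_congr rfl
  intro i hi
  rw [count_filter_ne s (Finset.ne_of_mem_erase hi)]

lemma mLambda_dvd (s : Multiset ℕ) : mLambda s ∣ (Multiset.card s).factorial := by
  rw [mLambda, ← Multiset.toFinset_sum_count_eq s]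
  exact Nat.prod_factorial_dvd_factorial_sum _ _

lemma forall_ne_of_count_prof_zero {k : α → ℕ} {a : ℕ} (ha0 : a ≠ 0)
    (h : (prof k).count a = 0) : ∀ i, k i ≠ a := by
  intro i hi
  rw [count_prof k ha0, Finset.card_eq_zero, Finset.filter_eq_empty_iff] at h
  exact h (Finset.mem_univ i) hi

lemma card_Fset_step (s : Multiset ℕ) (h0 : 0 ∉ s) {a : ℕ} (ha : a ∈ s) :
    (Fset α s).card
      = (Fintype.card α - Multiset.card (s.filter (· ≠ a))).choose (s.count a) *
        (Fset α (s.filter (· ≠ a))).card := by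
  classical
  set s' := s.filter (· ≠ a) with hs'
  set c := s.count a with hc
  have ha0 : a ≠ 0 := fun h => h0 (h ▸ ha)
  set g : (α → ℕ) → (α → ℕ) := fun k i => if k i = a then 0 else k i with hg
  -- counts of s'
  have hcount' : ∀ b, s'.count b = if b = a then 0 else s.count b := by
    intro b
    rw [hs', Multiset.count_filter]
    split_ifs with h1 h2 h2 <;> simp_all
  -- g maps Fset s to Fset s'
  have hgmem : ∀ k ∈ Fset α s, g k ∈ Fset α s' := by
    intro k hk
    rw [mem_Fset] at hk ⊢
    ext b
    rcases eq_or_ne b 0 with rfl | hb0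
    · rw [count_prof_zero, Multiset.count_eq_zero_of_notMem]
      rw [hs']
      intro hmem
      exact (Multiset.mem_filter.1 hmem).1 |> h0 ∘ (fun h => h) |>.elim
    · rw [count_prof _ hb0, hcount' b]
      split_ifs with hba
      · subst hba
        rw [Finset.card_eq_zero, Finset.filter_eq_empty_iff]
        intro i _
        rw [hg]
        simp only
        split_ifs with h1
        · exact fun h => ha0 h.symm
        · exact h1
      · rw [← hk, count_prof _ hb0]
        have hpred : ∀ i, (g k i = b) ↔ (k i = b) := by
          intro i
          rw [hg]
          simp only
          by_cases h1 : k i = a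
          · rw [if_pos h1, h1]
            exact iff_of_false (fun h => hb0 h.symm) (fun h => hba h.symm)
          · rw [if_neg h1]
        rw [Finset.filter_congr (fun i _ => hpred i)]
  rw [Finset.card_eq_sum_card_fiberwise hgmem]
  have hfiber : ∀ k' ∈ Fset α s',
      ((Fset α s).filter (fun k => g k = k')).card
        = (Fintype.card α - Multiset.card s').choose c := by
    intro k' hk'
    have hk'p : prof k' = s' := mem_Fset.1 hk'
    have hk'a : ∀ i, k' i ≠ a := by
      apply forall_ne_of_count_prof_zero ha0
      rw [hk'p, hcount']
      simp
    set Z := Finset.univ.filter (fun i => k' i = 0) with hZdef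
    have hZcard : Z.card = Fintype.card α - Multiset.card s' := by
      have h1 := Finset.card_filter_add_card_filter_not
        (s := (Finset.univ : Finset α)) (p := fun i => k' i = 0)
      have h2 : (Finset.univ.filter (fun i => ¬ k' i = 0)).card = Multiset.card s' := by
        rw [← hk'p, card_prof]
      rw [Finset.card_univ, h2] at h1
      rw [hZdef]
      omega
    rw [← hZcard, ← Finset.card_powersetCard]
    apply Finset.card_nbij' (i := fun k => Finset.univ.filter (fun i => k i = a))
      (j := fun T => fun i => if i ∈ T then a else k' i)
    · intro k hk
      simp only [Finset.mem_coe] at hk ⊢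
      rw [Finset.mem_filter] at hk
      obtain ⟨hks, hgk⟩ := hk
      have hkp : prof k = s := mem_Fset.1 hks
      rw [Finset.mem_powersetCard]
      constructor
      · intro i hi
        rw [Finset.mem_filter] at hi
        rw [hZdef, Finset.mem_filter]
        refine ⟨Finset.mem_univ _, ?_⟩
        rw [← hgk, hg]
        simp only [hi.2, if_pos]
      · rw [← count_prof k ha0, hkp]
    · intro T hT
      simp only [Finset.mem_coe] at hT ⊢
      rw [Finset.mem_powersetCard] at hT
      obtain ⟨hTZ, hTc⟩ := hT
      have hTzero : ∀ i ∈ T, k' i = 0 := fun i hi => (Finset.mem_filter.1 (hTZ hi)).2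
      rw [Finset.mem_filter]
      constructor
      · rw [mem_Fset]
        ext b
        rcases eq_or_ne b 0 with rfl | hb0
        · rw [count_prof_zero, Multiset.count_eq_zero_of_notMem h0]
        · rw [count_prof _ hb0]
          rcases eq_or_ne b a with rfl | hba
          · have hfe : Finset.univ.filter (fun i => (if i ∈ T then b else k' i) = b) = T := by
              ext i
              simp only [Finset.mem_filter, Finset.mem_univ, true_and]
              by_cases hi : i ∈ T
              · simp [hi]
              · simp [hi, hk'a i]
            rw [hfe, hTc]
          · have hfe : Finset.univ.filter (fun i => (if i ∈ T then a else k' i) = b)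
                = Finset.univ.filter (fun i => k' i = b) := by
              ext i
              simp only [Finset.mem_filter, Finset.mem_univ, true_and]
              by_cases hi : i ∈ T
              · simp only [hi, if_pos]
                exact iff_of_false (fun h => hba h.symm)
                  (fun h => hb0 (h.symm.trans (hTzero i hi)))
              · simp [hi]
            rw [hfe, ← count_prof k' hb0, hk'p, hcount' b, if_neg hba]
      · funext i
        rw [hg]
        simp only
        by_cases hi : i ∈ T
        · simp [hi, hTzero i hi]
        · simp [hi, hk'a i]
    · intro k hk
      rw [Finset.mem_coe] at hk
      rw [Finset.mem_filter] at hk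
      obtain ⟨hks, hgk⟩ := hk
      funext i
      by_cases hi : k i = a
      · simp [Finset.mem_filter, hi]
      · have : k' i = k i := by
          rw [← hgk, hg]
          simp [hi]
        simp [Finset.mem_filter, hi, this]
    · intro T hT
      rw [Finset.mem_coe] at hT
      rw [Finset.mem_powersetCard] at hT
      ext i
      simp only [Finset.mem_filter, Finset.mem_univ, true_and]
      by_cases hi : i ∈ T
      · simp [hi]
      · simp [hi, hk'a i]
  rw [Finset.sum_congr rfl hfiber, Finset.sum_const, smul_eq_mul, mul_comm]

lemma card_Fset_aux (n : ℕ) : ∀ s : Multiset ℕ, Multiset.card s = n → 0 ∉ s →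
    Multiset.card s ≤ Fintype.card α →
    (Fset α s).card * (mLambda s * Nat.factorial (Fintype.card α - Multiset.card s))
      = Nat.factorial (Fintype.card α) := by
  induction n using Nat.strong_induction_on with
  | _ n ih =>
  intro s hn h0 hc
  rcases Multiset.empty_or_exists_mem s with rfl | ⟨a, ha⟩
  · rw [Fset_zero]
    simp [mLambda]
  · set s' := s.filter (· ≠ a) with hs'
    have hcard : Multiset.card s = s.count a + Multiset.card s' := card_filter_ne s a
    have hcpos : 1 ≤ s.count a := Multiset.one_le_count_iff_mem.2 ha
    have h0' : 0 ∉ s' := fun h => h0 (Multiset.mem_filter.1 h).1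
    have hc' : Multiset.card s' ≤ Fintype.card α := by omega
    rw [card_Fset_step s h0 ha, mLambda_filter s ha]
    have ihs' := ih (Multiset.card s') (by omega) s' rfl h0' hc'
    have h5 : s.count a ≤ Fintype.card α - Multiset.card s' := by omega
    have key := Nat.choose_mul_factorial_mul_factorial h5
    have h6 : Fintype.card α - Multiset.card s' - s.count a
        = Fintype.card α - Multiset.card s := by omega
    rw [h6] at key
    rw [← ihs', ← key]
    ring

lemma prod_factorial_eq (k : α → ℕ) :
    ∏ i, (k i).factorial = ((prof k).map Nat.factorial).prod := by
  have h := Multiset.filter_add_not (fun x => x ≠ 0) (Multiset.map k Finset.univ.val)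
  have h2 : (((Multiset.map k Finset.univ.val).filter (fun x => ¬ x ≠ 0)).map
      Nat.factorial).prod = 1 := by
    apply Multiset.prod_eq_one
    intro x hx
    rw [Multiset.mem_map] at hx
    obtain ⟨y, hy, hxy⟩ := hx
    have : y = 0 := by simpa using Multiset.of_mem_filter hy
    rw [← hxy, this]
    rfl
  calc ∏ i, (k i).factorial
      = ((Multiset.map k Finset.univ.val).map Nat.factorial).prod := by
        rw [Multiset.map_map]
        rfl
    _ = ((prof k).map Nat.factorial).prod * (((Multiset.map k Finset.univ.val).filter
          (fun x => ¬ x ≠ 0)).map Nat.factorial).prod := by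
        rw [← Multiset.prod_add, ← Multiset.map_add, prof, h]
    _ = ((prof k).map Nat.factorial).prod := by rw [h2, mul_one]

lemma multinomial_eq_of_prof {s : Multiset ℕ} {k : α → ℕ} (hk : prof k = s) :
    Nat.multinomial Finset.univ k = Nat.factorial s.sum / (s.map Nat.factorial).prod := by
  have h1 : ∑ i, k i = s.sum := by rw [← sum_prof, hk]
  have h2 : ∏ i, (k i).factorial = (s.map Nat.factorial).prod := by
    rw [prod_factorial_eq, hk]
  rw [Nat.multinomial, h1, h2]

theorem sum_partitions_eq (n : ℕ) (hn : 1 ≤ n) :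
    ∑ lam : Nat.Partition n,
      (n + 1).choose (Multiset.card lam.parts) *
        (Nat.factorial (Multiset.card lam.parts) / mLambda lam.parts) *
        (Nat.factorial n / (lam.parts.map Nat.factorial).prod) = (n + 1) ^ n := by
  classical
  have expand : (n + 1) ^ n
      = ∑ k ∈ Finset.piAntidiag (Finset.univ : Finset (Fin (n + 1))) n,
          Nat.multinomial Finset.univ k := by
    have h := Finset.sum_pow_eq_sum_piAntidiag (Finset.univ : Finset (Fin (n + 1)))
      (fun _ => (1 : ℕ)) n
    simpa using h
  set g : (Fin (n + 1) → ℕ) → Nat.Partition n := fun k =>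
    if h : (prof k).sum = n ∧ ∀ i ∈ prof k, 0 < i then ⟨prof k, fun hi => h.2 _ hi, h.1⟩
    else default with hg
  have hmaps : ∀ k ∈ Finset.piAntidiag (Finset.univ : Finset (Fin (n + 1))) n,
      g k ∈ (Finset.univ : Finset (Nat.Partition n)) := fun _ _ => Finset.mem_univ _
  rw [expand, ← Finset.sum_fiberwise_of_maps_to hmaps (fun k => Nat.multinomial Finset.univ k)]
  apply Finset.sum_congr rfl
  intro lam _
  have hfilter : (Finset.piAntidiag (Finset.univ : Finset (Fin (n + 1))) n).filter
      (fun k => g k = lam) = Fset (Fin (n + 1)) lam.parts := by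
    ext k
    rw [Finset.mem_filter, mem_Fset]
    constructor
    · rintro ⟨hk1, hk2⟩
      rw [Finset.mem_piAntidiag] at hk1
      have hsum : (prof k).sum = n := by
        rw [sum_prof]
        exact hk1.1
      have hpos : ∀ i ∈ prof k, 0 < i := by
        intro i hi
        have := Multiset.of_mem_filter hi
        omega
      rw [hg] at hk2
      simp only [dif_pos (And.intro hsum hpos)] at hk2
      rw [← hk2]
    · intro hk
      have hsum : (prof k).sum = n := by rw [hk, lam.parts_sum]
      have hpos : ∀ i ∈ prof k, 0 < i := by
        intro i hi
        have := Multiset.of_mem_filter hi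
        omega
      constructor
      · rw [Finset.mem_piAntidiag]
        refine ⟨?_, fun i _ => Finset.mem_univ i⟩
        rw [← sum_prof]
        exact hsum
      · rw [hg]
        simp only [dif_pos (And.intro hsum hpos)]
        exact Nat.Partition.ext hk
  rw [hfilter]
  have h0 : 0 ∉ lam.parts := fun h => lt_irrefl 0 (lam.parts_pos h)
  have hmult : ∀ k ∈ Fset (Fin (n + 1)) lam.parts,
      Nat.multinomial Finset.univ k
        = Nat.factorial n / (lam.parts.map Nat.factorial).prod := by
    intro k hk
    rw [multinomial_eq_of_prof (mem_Fset.1 hk), lam.parts_sum]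
  rw [Finset.sum_congr rfl hmult, Finset.sum_const, smul_eq_mul]
  have hd_le : Multiset.card lam.parts ≤ n + 1 := by
    have h1 : Multiset.card lam.parts • 1 ≤ lam.parts.sum :=
      Multiset.card_nsmul_le_sum (fun x hx => lam.parts_pos hx)
    rw [lam.parts_sum, smul_eq_mul, mul_one] at h1
    omega
  have hcount := card_Fset_aux (α := Fin (n + 1)) (Multiset.card lam.parts) lam.parts rfl h0
    (by simpa using hd_le)
  rw [Fintype.card_fin] at hcount
  have hdvd : mLambda lam.parts ∣ (Multiset.card lam.parts).factorial := mLambda_dvd _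
  have hpos : 0 < mLambda lam.parts * (n + 1 - Multiset.card lam.parts).factorial := by
    refine Nat.mul_pos ?_ (Nat.factorial_pos _)
    apply Finset.prod_pos
    intro i _
    exact Nat.factorial_pos _
  have hX : ((n + 1).choose (Multiset.card lam.parts) *
      ((Multiset.card lam.parts).factorial / mLambda lam.parts)) *
      (mLambda lam.parts * (n + 1 - Multiset.card lam.parts).factorial)
      = Nat.factorial (n + 1) := by
    calc ((n + 1).choose (Multiset.card lam.parts) *
        ((Multiset.card lam.parts).factorial / mLambda lam.parts)) *
        (mLambda lam.parts * (n + 1 - Multiset.card lam.parts).factorial)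
        = (n + 1).choose (Multiset.card lam.parts) *
          (((Multiset.card lam.parts).factorial / mLambda lam.parts * mLambda lam.parts) *
            (n + 1 - Multiset.card lam.parts).factorial) := by ring
      _ = (n + 1).choose (Multiset.card lam.parts) *
          ((Multiset.card lam.parts).factorial *
            (n + 1 - Multiset.card lam.parts).factorial) := by
          rw [Nat.div_mul_cancel hdvd]
      _ = Nat.factorial (n + 1) := by
          rw [← mul_assoc]
          exact Nat.choose_mul_factorial_mul_factorial hd_le
  have hcard_eq : (Fset (Fin (n + 1)) lam.parts).card
      = (n + 1).choose (Multiset.card lam.parts) *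
        ((Multiset.card lam.parts).factorial / mLambda lam.parts) :=
    Nat.eq_of_mul_eq_mul_right hpos (hcount.trans hX.symm)
  rw [hcard_eq]
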